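/- arXiv:1912.11119 — 3 statements merged into one kernel-verified Lean document; each statement's English description precedes it below -/
import Mathlib

section
/- If p_λ is concave, nondecreasing, continuously differentiable on (0,∞) with p_λ(0)=0 and θ₀ ≠ 0, then the local quadratic approximation G(θ|θ₀) = p_λ(|θ₀|) + (θ² − θ₀²) p'_λ(|θ₀|+)/(2|θ₀|) majorizes θ ↦ p_λ(|θ|) at θ₀. -/
open Filter

private lemma tangent_le {p p' : ℝ → ℝ}
    (hderiv : ∀ x ∈ Set.Ioi (0 : ℝ), HasDerivAt p (p' x) x)
    (hconc : ConcaveOn ℝ (Set.Ioi 0) p) :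
    ∀ s ∈ Set.Ioi (0:ℝ), ∀ t ∈ Set.Ioi (0:ℝ), p t ≤ p s + (t - s) * p' s := by
  intro s hs t ht
  rcases lt_trichotomy t s with h | h | h
  · have := hconc.le_slope_of_hasDerivAt ht hs h (hderiv s hs)
    rw [slope_def_field] at this
    have hst : s - t > 0 := by linarith
    rw [le_div_iff₀ hst] at this
    nlinarith
  · simp [h]
  · have := hconc.slope_le_of_hasDerivAt hs ht h (hderiv s hs)
    rw [slope_def_field] at this
    have hst : t - s > 0 := by linarith
    rw [div_le_iff₀ hst] at this
    nlinarith

/-- The local quadratic approximation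
G(θ|θ₀) = p(|θ₀|) + (θ² − θ₀²)p'(|θ₀|+)/(2|θ₀|), for θ₀ ≠ 0,
majorizes θ ↦ p(|θ|) at θ₀. -/
theorem lqa_majorizes (p p' : ℝ → ℝ) (θ₀ : ℝ) (hθ₀ : θ₀ ≠ 0) (q : ℝ)
    (hderiv : ∀ x ∈ Set.Ioi (0 : ℝ), HasDerivAt p (p' x) x)
    (hcont : ContinuousOn p' (Set.Ioi 0))
    (hmono : MonotoneOn p (Set.Ici 0))
    (hconc : ConcaveOn ℝ (Set.Ioi 0) p)
    (hp0 : p 0 = 0)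
    (hq : Tendsto p' (nhdsWithin |θ₀| (Set.Ioi |θ₀|)) (nhds q)) :
    (∀ θ : ℝ, p |θ| ≤ p |θ₀| + (θ ^ 2 - θ₀ ^ 2) * q / (2 * |θ₀|)) ∧
    p |θ₀| + (θ₀ ^ 2 - θ₀ ^ 2) * q / (2 * |θ₀|) = p |θ₀| := by
  set a := |θ₀| with ha
  have ha0 : 0 < a := abs_pos.mpr hθ₀
  -- p' nonneg on Ioi 0
  have hp'nn : ∀ s ∈ Set.Ioi (0:ℝ), 0 ≤ p' s := by
    intro s hs
    have h1 : slope p s (s+1) ≤ p' s :=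
      hconc.slope_le_of_hasDerivAt hs (by simp at hs ⊢; linarith) (by linarith) (hderiv s hs)
    have h2 : p s ≤ p (s+1) := hmono (Set.mem_Ici.mpr (le_of_lt hs)) (by simp at hs ⊢; linarith) (by linarith)
    rw [slope_def_field] at h1
    have : (0:ℝ) ≤ (p (s+1) - p s) / (s + 1 - s) := by
      apply div_nonneg <;> linarith
    linarith
  -- p nonneg on Ici 0
  have hpnn : ∀ t, 0 ≤ t → 0 ≤ p t := fun t ht => hp0 ▸ hmono (Set.mem_Ici.mpr le_rfl) (Set.mem_Ici.mpr ht) ht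
  -- p s ≥ s * p' s for s > 0
  have hkey : ∀ s ∈ Set.Ioi (0:ℝ), s * p' s ≤ p s := by
    intro s hs
    have htend : Tendsto (fun t => p s + (t - s) * p' s) (nhdsWithin 0 (Set.Ioi 0))
        (nhds (p s + (0 - s) * p' s)) := by
      apply Tendsto.mono_left _ nhdsWithin_le_nhds
      exact (tendsto_const_nhds.add (((continuous_id.sub continuous_const).mul
        continuous_const).tendsto 0))
    have hle : ∀ᶠ t in nhdsWithin (0:ℝ) (Set.Ioi 0), (0:ℝ) ≤ p s + (t - s) * p' s := by
      filter_upwards [self_mem_nhdsWithin] with t ht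
      exact le_trans (hpnn t (le_of_lt ht)) (tangent_le hderiv hconc s hs t ht)
    linarith [ge_of_tendsto htend hle]
  -- continuity of p at a from the right
  have hpc : Tendsto p (nhdsWithin a (Set.Ioi a)) (nhds (p a)) :=
    ((hderiv a ha0).continuousAt.continuousWithinAt)
  -- p t ≤ p a + (t - a) * q for t > 0
  have hmain : ∀ t ∈ Set.Ioi (0:ℝ), p t ≤ p a + (t - a) * q := by
    intro t ht
    have htend : Tendsto (fun s => p s + (t - s) * p' s) (nhdsWithin a (Set.Ioi a))
        (nhds (p a + (t - a) * q)) := by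
      apply hpc.add
      apply Tendsto.mul _ hq
      exact Tendsto.mono_left ((continuous_const.sub continuous_id).tendsto a) nhdsWithin_le_nhds
    apply ge_of_tendsto htend
    filter_upwards [self_mem_nhdsWithin] with s hs
    exact tangent_le hderiv hconc s (lt_trans ha0 hs) t ht
  -- q ≥ 0
  have hq0 : 0 ≤ q := by
    apply ge_of_tendsto hq
    filter_upwards [self_mem_nhdsWithin] with s hs
    exact hp'nn s (lt_trans ha0 hs)
  -- p a ≥ a * q
  have hpaq : a * q ≤ p a := by
    have htend : Tendsto (fun s => p s - s * p' s) (nhdsWithin a (Set.Ioi a))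
        (nhds (p a - a * q)) := by
      apply hpc.sub
      exact (Tendsto.mono_left (continuous_id.tendsto a) nhdsWithin_le_nhds).mul hq
    have : 0 ≤ p a - a * q := by
      apply ge_of_tendsto htend
      filter_upwards [self_mem_nhdsWithin] with s hs
      linarith [hkey s (lt_trans ha0 hs)]
    linarith
  constructor
  · intro θ
    have habs : θ ^ 2 = |θ| ^ 2 := (sq_abs θ).symm
    have habs0 : θ₀ ^ 2 = a ^ 2 := (sq_abs θ₀).symm
    set t := |θ| with htdef
    rcases eq_or_lt_of_le (abs_nonneg θ) with h | h
    · have ht0 : t = 0 := h.symm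
      rw [habs, habs0, ht0, hp0]
      have he : ((0:ℝ) ^ 2 - a ^ 2) * q / (2 * a) = -(a * q) / 2 := by
        field_simp; ring
      rw [he]
      linarith [mul_nonneg ha0.le hq0]
    · have h1 := hmain t h
      have h2 : (t - a) * q ≤ (t ^ 2 - a ^ 2) * q / (2 * a) := by
        rw [le_div_iff₀ (by linarith)]
        nlinarith [sq_nonneg (t - a)]
      rw [habs, habs0]
      linarith
  · simp
end

section
/- Suppose ℓ(·|z) majorizes L at each z, both continuously differentiable, and ∇L(φ*) = ∇ℓ(φ*|φ*). If φ* is a local minimizer of F(φ) = L(φ) + Λ(φ) with Λ locally Lipschitz, then ∂_C Q(φ*|φ*) = ∂_C F(φ*) and 0 ∈ ∂_C Q(φ*|φ*), where Q(φ|φ*) = ℓ(φ|φ*) + Λ(φ). -/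
open Filter

variable {m : ℕ}

/-- Clarke directional derivative of f at x in direction ε. -/
noncomputable def clarkeDeriv (f : EuclideanSpace ℝ (Fin m) → ℝ)
    (x ε : EuclideanSpace ℝ (Fin m)) : ℝ :=
  Filter.limsup (fun q : EuclideanSpace ℝ (Fin m) × ℝ => (f (q.1 + q.2 • ε) - f q.1) / q.2)
    ((nhds x) ×ˢ (nhdsWithin 0 (Set.Ioi 0)))

/-- Clarke subdifferential of f at x. -/
noncomputable def clarkeSubdiff (f : EuclideanSpace ℝ (Fin m) → ℝ)
    (x : EuclideanSpace ℝ (Fin m)) : Set (EuclideanSpace ℝ (Fin m)) :=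
  {v | ∀ d, inner ℝ v d ≤ clarkeDeriv f x d}

/-- limsup of a sum where the second term tends to zero. -/
private lemma limsup_add_tendsto_zero {ι : Type*} {f : Filter ι} [f.NeBot]
    {a b : ι → ℝ} (ha₁ : IsBoundedUnder (· ≤ ·) f a) (ha₂ : IsBoundedUnder (· ≥ ·) f a)
    (hb : Tendsto b f (nhds 0)) :
    limsup (fun i => a i + b i) f = limsup a f := by
  have hb₁ : IsBoundedUnder (· ≤ ·) f b := hb.isBoundedUnder_le
  have hb₂ : IsBoundedUnder (· ≥ ·) f b := hb.isBoundedUnder_ge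
  have hb0 : limsup b f = 0 := hb.limsup_eq
  have hnb : Tendsto (fun i => -b i) f (nhds 0) := by simpa using hb.neg
  have hnb0 : limsup (fun i => -b i) f = 0 := hnb.limsup_eq
  have hab₁ : IsBoundedUnder (· ≤ ·) f (fun i => a i + b i) := by
    obtain ⟨c₁, hc₁⟩ := ha₁
    obtain ⟨c₂, hc₂⟩ := hb₁
    refine isBoundedUnder_of_eventually_le (a := c₁ + c₂) ?_
    filter_upwards [eventually_map.1 hc₁, eventually_map.1 hc₂] with i h1 h2
    exact add_le_add h1 h2
  have hab₂ : IsBoundedUnder (· ≥ ·) f (fun i => a i + b i) := by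
    obtain ⟨c₁, hc₁⟩ := ha₂
    obtain ⟨c₂, hc₂⟩ := hb₂
    refine isBoundedUnder_of_eventually_ge (a := c₁ + c₂) ?_
    filter_upwards [eventually_map.1 hc₁, eventually_map.1 hc₂] with i h1 h2
    exact add_le_add h1 h2
  apply le_antisymm
  · have h := limsup_add_le (f := f) (u := a) (v := b) ha₂ ha₁ hb₂.isCoboundedUnder_le hb₁
    have : limsup (fun i => a i + b i) f = limsup (a + b) f := rfl
    rw [this]
    simpa [hb0] using h
  · have h := limsup_add_le (f := f) (u := fun i => a i + b i) (v := fun i => -b i)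
      hab₂ hab₁ hnb.isBoundedUnder_ge.isCoboundedUnder_le hnb.isBoundedUnder_le
    have he : ((fun i => a i + b i) + fun i => -b i) = a := by funext i; simp
    rw [he, hnb0, add_zero] at h
    exact h

private lemma mem_ball_add_smul {x φ d : EuclideanSpace ℝ (Fin m)} {t δ : ℝ}
    (h1 : φ ∈ Metric.ball x (δ / 2)) (h2 : t ∈ Set.Ioo 0 (δ / (2 * (‖d‖ + 1)))) :
    φ + t • d ∈ Metric.ball x δ := by
  have hd1 : (0 : ℝ) < ‖d‖ + 1 := by positivity
  have ht0 : 0 < t := h2.1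
  have ht : t * (2 * (‖d‖ + 1)) < δ := (lt_div_iff₀ (by positivity)).1 h2.2
  have hφ : ‖φ - x‖ < δ / 2 := by
    rw [Metric.mem_ball, dist_eq_norm] at h1; exact h1
  rw [Metric.mem_ball, dist_eq_norm]
  have : ‖φ + t • d - x‖ ≤ ‖φ - x‖ + ‖t • d‖ := by
    have : φ + t • d - x = (φ - x) + t • d := by abel
    rw [this]; exact norm_add_le _ _
  have hts : ‖t • d‖ = t * ‖d‖ := by
    rw [norm_smul, Real.norm_eq_abs, abs_of_pos ht0]
  nlinarith [norm_nonneg d, norm_nonneg (φ - x)]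

/-- Eventual bound on difference quotients from a local Lipschitz bound. -/
private lemma quot_eventually_bound {x d : EuclideanSpace ℝ (Fin m)}
    {f : EuclideanSpace ℝ (Fin m) → ℝ} {K : NNReal} {s : Set (EuclideanSpace ℝ (Fin m))}
    (hs : s ∈ nhds x) (hf : LipschitzOnWith K f s) :
    ∀ᶠ q : EuclideanSpace ℝ (Fin m) × ℝ in (nhds x) ×ˢ (nhdsWithin 0 (Set.Ioi 0)),
      |(f (q.1 + q.2 • d) - f q.1) / q.2| ≤ K * ‖d‖ := by
  obtain ⟨ε, hε, hball⟩ := Metric.mem_nhds_iff.1 hs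
  have hd1 : (0 : ℝ) < ‖d‖ + 1 := by positivity
  have h1 : ∀ᶠ φ in nhds x, φ ∈ Metric.ball x (ε / 2) :=
    Metric.ball_mem_nhds x (by linarith)
  have h2 : ∀ᶠ t in nhdsWithin (0 : ℝ) (Set.Ioi 0), t ∈ Set.Ioo 0 (ε / (2 * (‖d‖ + 1))) :=
    Ioo_mem_nhdsGT_of_mem ⟨le_refl 0, by positivity⟩
  filter_upwards [h1.prod_mk h2] with q hq
  obtain ⟨hq1, hq2⟩ := hq
  have ht0 : 0 < q.2 := hq2.1
  have hm1 : q.1 ∈ s := hball (Metric.ball_subset_ball (by linarith) hq1)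
  have hm2 : q.1 + q.2 • d ∈ s := hball (mem_ball_add_smul hq1 hq2)
  have hdist := hf.dist_le_mul _ hm2 _ hm1
  have hd2 : dist (q.1 + q.2 • d) q.1 = q.2 * ‖d‖ := by
    rw [dist_eq_norm]
    have : q.1 + q.2 • d - q.1 = q.2 • d := by abel
    rw [this, norm_smul, Real.norm_eq_abs, abs_of_pos ht0]
  rw [Real.dist_eq, hd2] at hdist
  rw [abs_div, abs_of_pos ht0, div_le_iff₀ ht0]
  calc |f (q.1 + q.2 • d) - f q.1| ≤ K * (q.2 * ‖d‖) := hdist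
    _ = K * ‖d‖ * q.2 := by ring

/-- Difference quotients of a C¹ function with vanishing derivative at x tend to 0. -/
private lemma quot_tendsto_zero {x d : EuclideanSpace ℝ (Fin m)}
    {g : EuclideanSpace ℝ (Fin m) → ℝ} (hg : ContDiff ℝ 1 g)
    (h0 : fderiv ℝ g x = 0) :
    Tendsto (fun q : EuclideanSpace ℝ (Fin m) × ℝ => (g (q.1 + q.2 • d) - g q.1) / q.2)
      ((nhds x) ×ˢ (nhdsWithin 0 (Set.Ioi 0))) (nhds 0) := by
  rw [NormedAddCommGroup.tendsto_nhds_zero]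
  intro ε hε
  have hd1 : (0 : ℝ) < ‖d‖ + 1 := by positivity
  set ε' := ε / 2 / (‖d‖ + 1) with hε'def
  have hε' : 0 < ε' := by positivity
  have hcont : Continuous (fderiv ℝ g) := hg.continuous_fderiv (by norm_num)
  have hev : ∀ᶠ y in nhds x, ‖fderiv ℝ g y‖ < ε' := by
    have ht : Tendsto (fderiv ℝ g) (nhds x) (nhds 0) := by
      have := hcont.tendsto x; rwa [h0] at this
    have hmem := ht (Metric.ball_mem_nhds (0 : EuclideanSpace ℝ (Fin m) →L[ℝ] ℝ) hε')
    filter_upwards [hmem] with y hy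
    simpa [Metric.mem_ball, dist_zero_right] using hy
  obtain ⟨δ, hδ, hbound⟩ := Metric.eventually_nhds_iff_ball.1 hev
  have h1 : ∀ᶠ φ in nhds x, φ ∈ Metric.ball x (δ / 2) :=
    Metric.ball_mem_nhds x (by linarith)
  have h2 : ∀ᶠ t in nhdsWithin (0 : ℝ) (Set.Ioi 0), t ∈ Set.Ioo 0 (δ / (2 * (‖d‖ + 1))) :=
    Ioo_mem_nhdsGT_of_mem ⟨le_refl 0, by positivity⟩
  filter_upwards [h1.prod_mk h2] with q hq
  obtain ⟨hq1, hq2⟩ := hq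
  have ht0 : 0 < q.2 := hq2.1
  have hm1 : q.1 ∈ Metric.ball x δ := Metric.ball_subset_ball (by linarith) hq1
  have hm2 : q.1 + q.2 • d ∈ Metric.ball x δ := mem_ball_add_smul hq1 hq2
  have hkey := Convex.norm_image_sub_le_of_norm_fderiv_le
    (fun y _ => (hg.differentiable (by norm_num)) y)
    (fun y hy => (hbound y hy).le) (convex_ball x δ) hm1 hm2
  have hd2 : ‖q.1 + q.2 • d - q.1‖ = q.2 * ‖d‖ := by
    have : q.1 + q.2 • d - q.1 = q.2 • d := by abel
    rw [this, norm_smul, Real.norm_eq_abs, abs_of_pos ht0]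
  rw [hd2] at hkey
  have : ‖(g (q.1 + q.2 • d) - g q.1) / q.2‖ = ‖g (q.1 + q.2 • d) - g q.1‖ / q.2 := by
    rw [Real.norm_eq_abs, Real.norm_eq_abs, abs_div, abs_of_pos ht0]
  rw [this]
  rw [div_lt_iff₀ ht0]
  calc ‖g (q.1 + q.2 • d) - g q.1‖ ≤ ε' * (q.2 * ‖d‖) := hkey
    _ ≤ ε' * (q.2 * (‖d‖ + 1)) := by nlinarith [norm_nonneg d]
    _ = (ε / 2) * q.2 := by rw [hε'def]; field_simp
    _ < ε * q.2 := by nlinarith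

/-- If ℓ(·|z) majorizes L at every z, both continuously differentiable,
with matching gradients at φ*, and φ* is a local minimizer of
F = L + Λ with Λ locally Lipschitz, then ∂_C Q(φ*|φ*) = ∂_C F(φ*) and
0 ∈ ∂_C Q(φ*|φ*), where Q(φ|φ*) = ℓ(φ|φ*) + Λ(φ). -/
theorem clarke_subdiff_surrogate_eq
    (L : EuclideanSpace ℝ (Fin m) → ℝ)
    (ℓ : EuclideanSpace ℝ (Fin m) → EuclideanSpace ℝ (Fin m) → ℝ)
    (Λ : EuclideanSpace ℝ (Fin m) → ℝ)
    (hL : ContDiff ℝ 1 L) (hℓ : ∀ z, ContDiff ℝ 1 (fun φ => ℓ φ z))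
    (hΛ : LocallyLipschitz Λ)
    (hmaj : ∀ z φ, L φ ≤ ℓ φ z) (heq : ∀ z, L z = ℓ z z)
    (φs : EuclideanSpace ℝ (Fin m))
    (hgrad : gradient L φs = gradient (fun φ => ℓ φ φs) φs)
    (hmin : IsLocalMin (fun φ => L φ + Λ φ) φs) :
    clarkeSubdiff (fun φ => ℓ φ φs + Λ φ) φs =
      clarkeSubdiff (fun φ => L φ + Λ φ) φs ∧
    0 ∈ clarkeSubdiff (fun φ => ℓ φ φs + Λ φ) φs := by
  classical
  have hℓs : ContDiff ℝ 1 (fun φ => ℓ φ φs) := hℓ φs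
  have hgC : ContDiff ℝ 1 (fun φ => ℓ φ φs - L φ) := hℓs.sub hL
  -- fderiv of g := ℓ(·|φs) - L vanishes at φs
  have hfd : fderiv ℝ L φs = fderiv ℝ (fun φ => ℓ φ φs) φs := by
    have h := congrArg (InnerProductSpace.toDual ℝ (EuclideanSpace ℝ (Fin m))) hgrad
    simpa [gradient] using h
  have hg0 : fderiv ℝ (fun φ => ℓ φ φs - L φ) φs = 0 := by
    have hdiff1 : DifferentiableAt ℝ (fun φ => ℓ φ φs) φs := (hℓs.differentiable (by norm_num)) φs
    have hdiff2 : DifferentiableAt ℝ L φs := (hL.differentiable (by norm_num)) φs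
    rw [fderiv_fun_sub hdiff1 hdiff2, ← hfd, sub_self]
  -- local Lipschitz data
  obtain ⟨K₁, s₁, hs₁, hlip₁⟩ := hL.locallyLipschitz φs
  obtain ⟨K₂, s₂, hs₂, hlip₂⟩ := hΛ φs
  -- bound on difference quotients of F₂ = L + Λ
  have hbF : ∀ d : EuclideanSpace ℝ (Fin m),
      ∀ᶠ q : EuclideanSpace ℝ (Fin m) × ℝ in (nhds φs) ×ˢ (nhdsWithin 0 (Set.Ioi 0)),
        |((L (q.1 + q.2 • d) + Λ (q.1 + q.2 • d)) - (L q.1 + Λ q.1)) / q.2|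
          ≤ K₁ * ‖d‖ + K₂ * ‖d‖ := by
    intro d
    filter_upwards [quot_eventually_bound (d := d) hs₁ hlip₁,
      quot_eventually_bound (d := d) hs₂ hlip₂] with q h1 h2
    have hsplit : ((L (q.1 + q.2 • d) + Λ (q.1 + q.2 • d)) - (L q.1 + Λ q.1)) / q.2
        = (L (q.1 + q.2 • d) - L q.1) / q.2 + (Λ (q.1 + q.2 • d) - Λ q.1) / q.2 := by
      rw [← add_div]; congr 1; ring
    rw [hsplit]
    exact (abs_add_le _ _).trans (add_le_add h1 h2)
  -- equality of Clarke directional derivatives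
  have hDeq : clarkeDeriv (fun φ => ℓ φ φs + Λ φ) φs = clarkeDeriv (fun φ => L φ + Λ φ) φs := by
    funext d
    have ha₁ : IsBoundedUnder (· ≤ ·) ((nhds φs) ×ˢ (nhdsWithin (0:ℝ) (Set.Ioi 0)))
        (fun q : EuclideanSpace ℝ (Fin m) × ℝ =>
          ((L (q.1 + q.2 • d) + Λ (q.1 + q.2 • d)) - (L q.1 + Λ q.1)) / q.2) :=
      isBoundedUnder_of_eventually_le ((hbF d).mono fun q h => (abs_le.1 h).2)
    have ha₂ : IsBoundedUnder (· ≥ ·) ((nhds φs) ×ˢ (nhdsWithin (0:ℝ) (Set.Ioi 0)))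
        (fun q : EuclideanSpace ℝ (Fin m) × ℝ =>
          ((L (q.1 + q.2 • d) + Λ (q.1 + q.2 • d)) - (L q.1 + Λ q.1)) / q.2) :=
      isBoundedUnder_of_eventually_ge ((hbF d).mono fun q h => (abs_le.1 h).1)
    have htz := quot_tendsto_zero (d := d) hgC hg0
    show limsup _ _ = limsup _ _
    have hpt : (fun q : EuclideanSpace ℝ (Fin m) × ℝ =>
        ((fun φ => ℓ φ φs + Λ φ) (q.1 + q.2 • d) - (fun φ => ℓ φ φs + Λ φ) q.1) / q.2)
        = fun q : EuclideanSpace ℝ (Fin m) × ℝ =>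
            ((L (q.1 + q.2 • d) + Λ (q.1 + q.2 • d)) - (L q.1 + Λ q.1)) / q.2
            + ((fun φ => ℓ φ φs - L φ) (q.1 + q.2 • d) - (fun φ => ℓ φ φs - L φ) q.1) / q.2 := by
      funext q
      simp only
      rw [← add_div]; congr 1; ring
    rw [hpt]
    exact limsup_add_tendsto_zero ha₁ ha₂ htz
  have hSeq : clarkeSubdiff (fun φ => ℓ φ φs + Λ φ) φs =
      clarkeSubdiff (fun φ => L φ + Λ φ) φs := by
    unfold clarkeSubdiff
    rw [hDeq]
  refine ⟨hSeq, ?_⟩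
  rw [hSeq]
  intro d
  rw [inner_zero_left]
  -- 0 ≤ clarkeDeriv (L + Λ) φs d, since φs is a local min
  have htend : Tendsto (fun t : ℝ => φs + t • d) (nhdsWithin 0 (Set.Ioi 0)) (nhds φs) := by
    have h : Tendsto (fun t : ℝ => φs + t • d) (nhds 0) (nhds (φs + (0:ℝ) • d)) :=
      ((tendsto_id.smul_const d).const_add φs)
    simpa using h.mono_left nhdsWithin_le_nhds
  have hins : Tendsto (fun t : ℝ => ((φs, t) : EuclideanSpace ℝ (Fin m) × ℝ))
      (nhdsWithin 0 (Set.Ioi 0)) ((nhds φs) ×ˢ (nhdsWithin 0 (Set.Ioi 0))) :=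
    Tendsto.prodMk tendsto_const_nhds tendsto_id
  have hnn : ∀ᶠ t in nhdsWithin (0:ℝ) (Set.Ioi 0),
      0 ≤ ((L (φs + t • d) + Λ (φs + t • d)) - (L φs + Λ φs)) / t := by
    filter_upwards [htend.eventually hmin, self_mem_nhdsWithin] with t h1 h2
    exact div_nonneg (sub_nonneg.2 h1) (le_of_lt h2)
  have hbu : IsBoundedUnder (· ≤ ·) ((nhds φs) ×ˢ (nhdsWithin (0:ℝ) (Set.Ioi 0)))
      (fun q : EuclideanSpace ℝ (Fin m) × ℝ =>
        ((L (q.1 + q.2 • d) + Λ (q.1 + q.2 • d)) - (L q.1 + Λ q.1)) / q.2) :=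
    isBoundedUnder_of_eventually_le ((hbF d).mono fun q h => (abs_le.1 h).2)
  have hbu' : IsBoundedUnder (· ≤ ·) (nhdsWithin (0:ℝ) (Set.Ioi 0))
      (fun t : ℝ => ((L (φs + t • d) + Λ (φs + t • d)) - (L φs + Λ φs)) / t) := by
    obtain ⟨c, hc⟩ := hbu
    exact isBoundedUnder_of_eventually_le (a := c) (hins.eventually (eventually_map.1 hc))
  have h1 : (0:ℝ) ≤ limsup
      (fun t : ℝ => ((L (φs + t • d) + Λ (φs + t • d)) - (L φs + Λ φs)) / t)
      (nhdsWithin (0:ℝ) (Set.Ioi 0)) :=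
    le_limsup_of_frequently_le hnn.frequently hbu'
  have hcb : IsCoboundedUnder (· ≤ ·)
      (map (fun t : ℝ => ((φs, t) : EuclideanSpace ℝ (Fin m) × ℝ)) (nhdsWithin 0 (Set.Ioi 0)))
      (fun q : EuclideanSpace ℝ (Fin m) × ℝ =>
        ((L (q.1 + q.2 • d) + Λ (q.1 + q.2 • d)) - (L q.1 + Λ q.1)) / q.2) := by
    apply IsBoundedUnder.isCoboundedUnder_le
    exact isBoundedUnder_of_eventually_ge (a := (0:ℝ)) (eventually_map.2 hnn)
  have hmapeq : limsup
      (fun q : EuclideanSpace ℝ (Fin m) × ℝ =>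
        ((L (q.1 + q.2 • d) + Λ (q.1 + q.2 • d)) - (L q.1 + Λ q.1)) / q.2)
      (map (fun t : ℝ => ((φs, t) : EuclideanSpace ℝ (Fin m) × ℝ)) (nhdsWithin 0 (Set.Ioi 0)))
      = limsup (fun t : ℝ => ((L (φs + t • d) + Λ (φs + t • d)) - (L φs + Λ φs)) / t)
        (nhdsWithin (0:ℝ) (Set.Ioi 0)) := by
    rw [Filter.limsup, Filter.limsup, Filter.map_map]
    rfl
  have h2 := limsup_le_limsup_of_le hins hcb hbu
  show (0:ℝ) ≤ limsup
      (fun q : EuclideanSpace ℝ (Fin m) × ℝ =>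
        ((fun φ => L φ + Λ φ) (q.1 + q.2 • d) - (fun φ => L φ + Λ φ) q.1) / q.2)
      ((nhds φs) ×ˢ (nhdsWithin (0:ℝ) (Set.Ioi 0)))
  calc (0:ℝ) ≤ _ := h1
    _ = _ := hmapeq.symm
    _ ≤ _ := h2
end

section
/- Consider the MM iteration with surrogate Q(φ|φ^{(k)}) = F(φ) + D_r(φ|φ^{(k)}), where F is convex, r is differentiable convex, and D_r is the Bregman divergence of r. If φ^{(k+1)} globally minimizes Q(·|φ^{(k)}), then for all φ: Q(φ|φ^{(k)}) − Q(φ^{(k+1)}|φ^{(k)}) ≥ D_r(φ|φ^{(k+1)}) = Q(φ|φ^{(k+1)}) − F(φ) (the SUMMA inequality). -/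
/-- The SUMMA inequality for the MM iteration with Bregman surrogate
Q(φ|z) = F(φ) + D_r(φ|z): if w globally minimizes Q(·|z), then for all φ,
Q(φ|z) − Q(w|z) ≥ D_r(φ|w) = Q(φ|w) − F(φ). -/
theorem summa_inequality {m : ℕ}
    (F r : EuclideanSpace ℝ (Fin m) → ℝ)
    (hF : ConvexOn ℝ Set.univ F)
    (hr : Differentiable ℝ r) (hrconv : ConvexOn ℝ Set.univ r)
    (z w : EuclideanSpace ℝ (Fin m))
    (hmin : IsMinOn
      (fun φ => F φ + (r φ - r z - fderiv ℝ r z (φ - z))) Set.univ w) :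
    ∀ φ : EuclideanSpace ℝ (Fin m),
      r φ - r w - fderiv ℝ r w (φ - w) ≤
        (F φ + (r φ - r z - fderiv ℝ r z (φ - z))) -
        (F w + (r w - r z - fderiv ℝ r z (w - z))) := by
  intro φ
  set v := φ - w with hv
  set g : ℝ → ℝ := fun t => r (w + t • v) with hg
  -- derivative of g at 0
  have hline : ∀ t : ℝ, HasDerivAt (fun s : ℝ => w + s • v) v t := by
    intro t
    simpa using ((hasDerivAt_id t).smul_const v).const_add w
  have hg0 : HasDerivAt g (fderiv ℝ r w v) 0 := by
    have h := ((hr (w + (0:ℝ) • v)).hasFDerivAt).comp_hasDerivAt 0 (hline 0)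
    simp only [zero_smul, add_zero] at h
    exact h
  -- slope bound on (0,1]
  have slope_bound : ∀ t : ℝ, t ∈ Set.Ioc (0:ℝ) 1 →
      fderiv ℝ r z v - (F φ - F w) ≤ (g t - g 0) / t := by
    intro t ht
    obtain ⟨ht0, ht1⟩ := ht
    set x := w + t • v with hx
    have hmem := hmin (Set.mem_univ x)
    simp only [Set.mem_univ] at hmem
    -- convexity of F at x = (1-t) • w + t • φ
    have hxc : x = (1 - t) • w + t • φ := by
      rw [hx, hv]; module
    have hFx : F x ≤ (1 - t) * F w + t * F φ := by
      rw [hxc]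
      exact hF.2 (Set.mem_univ w) (Set.mem_univ φ) (by linarith) (le_of_lt ht0) (by ring)
    -- linearity of fderiv r z
    have hlin : fderiv ℝ r z (x - z) = t * fderiv ℝ r z v + fderiv ℝ r z (w - z) := by
      have : x - z = t • v + (w - z) := by rw [hx]; abel
      rw [this, map_add, map_smul]; simp
    have hgt : g t = r x := by rw [hg]
    have hg00 : g 0 = r w := by simp [hg]
    have hkey : t * (fderiv ℝ r z v - (F φ - F w)) ≤ g t - g 0 := by
      have hmem' : F w + (r w - r z - fderiv ℝ r z (w - z)) ≤
          F x + (r x - r z - fderiv ℝ r z (x - z)) := hmem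
      rw [hgt, hg00]
      nlinarith [hmem', hFx, hlin]
    rw [le_div_iff₀ ht0]
    calc (fderiv ℝ r z v - (F φ - F w)) * t
        = t * (fderiv ℝ r z v - (F φ - F w)) := by ring
      _ ≤ g t - g 0 := hkey
  -- take the limit t → 0⁺ of the slope
  have htend : Filter.Tendsto (slope g 0) (nhdsWithin 0 (Set.Ioi 0))
      (nhds (fderiv ℝ r w v)) := by
    have := hasDerivAt_iff_tendsto_slope.mp hg0
    exact this.mono_left (nhdsWithin_mono 0 (fun x hx => ne_of_gt hx))
  have hev : ∀ᶠ t in nhdsWithin (0:ℝ) (Set.Ioi 0),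
      fderiv ℝ r z v - (F φ - F w) ≤ slope g 0 t := by
    filter_upwards [Ioc_mem_nhdsGT_of_mem (Set.left_mem_Ico.mpr zero_lt_one)] with t ht
    have := slope_bound t ht
    simpa [slope_def_field, div_eq_iff (ne_of_gt ht.1)] using this
  have hle : fderiv ℝ r z v - (F φ - F w) ≤ fderiv ℝ r w v :=
    ge_of_tendsto htend hev
  -- conclude
  have hsplit : fderiv ℝ r z (φ - z) = fderiv ℝ r z v + fderiv ℝ r z (w - z) := by
    have : φ - z = v + (w - z) := by rw [hv]; abel
    rw [this, map_add]
  rw [hsplit]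
  linarith
end
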